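/- Let V₂, V₁, W, Q, Q₂ be real Hilbert spaces and let d₂ : V₂ → V₁, d₁ : V₁ → W, S₁ : V₁ → Q, S₂ : V₂ → Q₂, D : Q₂ → Q be continuous linear maps such that d₁ ∘ d₂ = 0, S₁ ∘ d₂ = D ∘ S₂, d₁ is surjective, and D ∘ S₂ : V₂ → Q is surjective. Then there exists a constant C > 0 such that for every v ∈ W and q ∈ Q, the supremum over nonzero τ ∈ V₁ of (⟨d₁ τ, v⟩_W + ⟨S₁ τ, q⟩_Q) / ‖τ‖_V is at least C (‖v‖ + ‖q‖), where ‖τ‖_V := √(‖τ‖² + ‖d₁ τ‖²) is the graph norm. -/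

import Mathlib

open scoped RealInnerProductSpace

private lemma aux_le_sqrt_add {a b : ℝ} (ha : 0 ≤ a) (hb : 0 ≤ b) :
    a ≤ Real.sqrt (a ^ 2 + b ^ 2) :=
  (Real.le_sqrt ha (by positivity)).mpr (by nlinarith)

private lemma aux_le_sqrt_add' {a b : ℝ} (ha : 0 ≤ a) (hb : 0 ≤ b) :
    b ≤ Real.sqrt (a ^ 2 + b ^ 2) :=
  (Real.le_sqrt hb (by positivity)).mpr (by nlinarith)

private lemma aux_div_le {a g K : ℝ} (hg : 0 ≤ g) (hK : 0 ≤ K) (h : a ≤ K * g) :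
    a / g ≤ K := by
  rcases hg.eq_or_lt with h0 | h0
  · rw [← h0, div_zero]; exact hK
  · exact (div_le_iff₀ h0).mpr (by linarith [h, mul_comm K g])


set_option maxHeartbeats 1000000

/-- Brezzi inf-sup condition (S2) for the continuous mixed problem derived from coupled
Hilbert complexes: under the complex property, the commuting diagram, surjectivity of `d₁`
and surjectivity of `D ∘ S₂`, there is `C > 0` such that for all `v, q` the supremum over
nonzero `τ` of `(⟨d₁ τ, v⟩ + ⟨S₁ τ, q⟩) / ‖τ‖_V` is at least `C (‖v‖ + ‖q‖)`, where
`‖τ‖_V = √(‖τ‖² + ‖d₁ τ‖²)` is the graph norm. -/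
theorem inf_sup_S2_of_coupled_complexes
    {V₂ V₁ W Q Q₂ : Type*}
    [NormedAddCommGroup V₂] [InnerProductSpace ℝ V₂] [CompleteSpace V₂]
    [NormedAddCommGroup V₁] [InnerProductSpace ℝ V₁] [CompleteSpace V₁]
    [NormedAddCommGroup W] [InnerProductSpace ℝ W] [CompleteSpace W]
    [NormedAddCommGroup Q] [InnerProductSpace ℝ Q] [CompleteSpace Q]
    [NormedAddCommGroup Q₂] [InnerProductSpace ℝ Q₂] [CompleteSpace Q₂]
    (d₂ : V₂ →L[ℝ] V₁) (d₁ : V₁ →L[ℝ] W) (S₁ : V₁ →L[ℝ] Q)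
    (S₂ : V₂ →L[ℝ] Q₂) (D : Q₂ →L[ℝ] Q)
    (hcomplex : ∀ x : V₂, d₁ (d₂ x) = 0)
    (hcomm : ∀ x : V₂, S₁ (d₂ x) = D (S₂ x))
    (hd₁ : Function.Surjective d₁)
    (hDS₂ : Function.Surjective (fun x : V₂ => D (S₂ x))) :
    ∃ C : ℝ, 0 < C ∧ ∀ (v : W) (q : Q),
      C * (‖v‖ + ‖q‖) ≤
        ⨆ τ : {τ : V₁ // τ ≠ 0},
          (⟪d₁ τ.1, v⟫ + ⟪S₁ τ.1, q⟫) / Real.sqrt (‖τ.1‖ ^ 2 + ‖d₁ τ.1‖ ^ 2) := by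

  obtain ⟨c₁, hc₁pos, hc₁⟩ := d₁.exists_preimage_norm_le hd₁
  obtain ⟨c₂, hc₂pos, hc₂⟩ := (D.comp S₂).exists_preimage_norm_le hDS₂
  set M : ℝ := c₁ + ‖d₂‖ * c₂ * (1 + ‖S₁‖ * c₁) with hMdef
  have hM0 : 0 ≤ M := by positivity
  set A : ℝ := Real.sqrt (M ^ 2 + 1) with hAdef
  have hA : 0 < A := Real.sqrt_pos.mpr (by positivity)
  refine ⟨1 / (2 * A), by positivity, ?_⟩
  intro v q
  by_cases h0 : v = 0 ∧ q = 0
  · obtain ⟨rfl, rfl⟩ := h0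
    simp only [norm_zero, add_zero, mul_zero]
    exact Real.iSup_nonneg fun τ => by simp
  · obtain ⟨τv, hτv, hτvn⟩ := hc₁ v
    obtain ⟨x, hx, hxn⟩ := hc₂ (q - S₁ τv)
    have hx' : D (S₂ x) = q - S₁ τv := hx
    set τ : V₁ := τv + d₂ x with hτdef
    have hd : d₁ τ = v := by
      simp [hτdef, map_add, hcomplex x, hτv]
    have hS : S₁ τ = q := by
      simp [hτdef, map_add, hcomm x, hx']
    have hτ0 : τ ≠ 0 := by
      intro h
      exact h0 ⟨by rw [← hd, h, map_zero], by rw [← hS, h, map_zero]⟩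
    have hxn' : ‖x‖ ≤ c₂ * (‖q‖ + ‖S₁‖ * (c₁ * ‖v‖)) := by
      refine hxn.trans ?_
      have h1 : ‖q - S₁ τv‖ ≤ ‖q‖ + ‖S₁ τv‖ := norm_sub_le _ _
      have h2 : ‖S₁ τv‖ ≤ ‖S₁‖ * ‖τv‖ := S₁.le_opNorm τv
      have h3 : ‖S₁‖ * ‖τv‖ ≤ ‖S₁‖ * (c₁ * ‖v‖) :=
        mul_le_mul_of_nonneg_left hτvn (norm_nonneg _)
      nlinarith [hc₂pos.le]
    have hτn : ‖τ‖ ≤ M * (‖v‖ + ‖q‖) := by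
      have h1 : ‖τ‖ ≤ ‖τv‖ + ‖d₂ x‖ := norm_add_le _ _
      have h2 : ‖d₂ x‖ ≤ ‖d₂‖ * ‖x‖ := d₂.le_opNorm x
      have h3 : ‖d₂‖ * ‖x‖ ≤ ‖d₂‖ * (c₂ * (‖q‖ + ‖S₁‖ * (c₁ * ‖v‖))) :=
        mul_le_mul_of_nonneg_left hxn' (norm_nonneg _)
      have hv0 : (0:ℝ) ≤ ‖v‖ := norm_nonneg _
      have hq0 : (0:ℝ) ≤ ‖q‖ := norm_nonneg _
      have hS0 : (0:ℝ) ≤ ‖S₁‖ := norm_nonneg _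
      have hD0 : (0:ℝ) ≤ ‖d₂‖ := norm_nonneg _
      rw [hMdef]
      nlinarith [mul_nonneg hD0 hc₂pos.le, mul_nonneg hS0 hc₁pos.le,
        mul_nonneg (mul_nonneg hD0 hc₂pos.le) (mul_nonneg hS0 hc₁pos.le),
        mul_nonneg hc₁pos.le hv0]
    clear_value τ
    set s : ℝ := ‖v‖ + ‖q‖ with hsdef
    have hs0 : 0 < s := by
      rcases not_and_or.mp h0 with h | h
      · have := norm_pos_iff.mpr h
        have := norm_nonneg q
        linarith
      · have := norm_pos_iff.mpr h
        have := norm_nonneg v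
        linarith
    have hbdd : BddAbove (Set.range fun σ : {σ : V₁ // σ ≠ 0} =>
        (⟪d₁ σ.1, v⟫ + ⟪S₁ σ.1, q⟫) / Real.sqrt (‖σ.1‖ ^ 2 + ‖d₁ σ.1‖ ^ 2)) := by
      refine ⟨‖v‖ + ‖S₁‖ * ‖q‖, ?_⟩
      rintro _ ⟨σ, rfl⟩
      have hg0 : (0:ℝ) ≤ Real.sqrt (‖σ.1‖ ^ 2 + ‖d₁ σ.1‖ ^ 2) := Real.sqrt_nonneg _
      refine aux_div_le hg0 (by positivity) ?_
      have hσg : ‖σ.1‖ ≤ Real.sqrt (‖σ.1‖ ^ 2 + ‖d₁ σ.1‖ ^ 2) :=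
        aux_le_sqrt_add (norm_nonneg _) (norm_nonneg _)
      have hdg : ‖d₁ σ.1‖ ≤ Real.sqrt (‖σ.1‖ ^ 2 + ‖d₁ σ.1‖ ^ 2) :=
        aux_le_sqrt_add' (norm_nonneg _) (norm_nonneg _)
      have h1 : ⟪d₁ σ.1, v⟫ ≤ ‖d₁ σ.1‖ * ‖v‖ := real_inner_le_norm _ _
      have h2 : ⟪S₁ σ.1, q⟫ ≤ ‖S₁ σ.1‖ * ‖q‖ := real_inner_le_norm _ _
      have h3 : ‖S₁ σ.1‖ ≤ ‖S₁‖ * ‖σ.1‖ := S₁.le_opNorm _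
      have hv0 : (0:ℝ) ≤ ‖v‖ := norm_nonneg _
      have hq0 : (0:ℝ) ≤ ‖q‖ := norm_nonneg _
      have hS0 : (0:ℝ) ≤ ‖S₁‖ := norm_nonneg _
      nlinarith [mul_nonneg hS0 hq0]
    have key : 1 / (2 * A) * s ≤
        (⟪d₁ τ, v⟫ + ⟪S₁ τ, q⟫) / Real.sqrt (‖τ‖ ^ 2 + ‖d₁ τ‖ ^ 2) := by
      rw [hd, hS, real_inner_self_eq_norm_sq, real_inner_self_eq_norm_sq]
      have hDn0 : 0 < Real.sqrt (‖τ‖ ^ 2 + ‖v‖ ^ 2) := by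
        have : 0 < ‖τ‖ := norm_pos_iff.mpr hτ0
        exact Real.sqrt_pos.mpr (by positivity)
      rw [le_div_iff₀ hDn0]
      have hDle : Real.sqrt (‖τ‖ ^ 2 + ‖v‖ ^ 2) ≤ A * s := by
        have h1 : ‖τ‖ ^ 2 + ‖v‖ ^ 2 ≤ (M ^ 2 + 1) * s ^ 2 := by
          have hv0 : ‖v‖ ≤ s := by
            have := norm_nonneg q; rw [hsdef]; linarith
          have ht2 : ‖τ‖ ^ 2 ≤ (M * s) ^ 2 :=
            pow_le_pow_left₀ (norm_nonneg _) hτn 2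
          have hv2 : ‖v‖ ^ 2 ≤ s ^ 2 := pow_le_pow_left₀ (norm_nonneg _) hv0 2
          nlinarith [ht2, hv2]
        calc Real.sqrt (‖τ‖ ^ 2 + ‖v‖ ^ 2) ≤ Real.sqrt ((M ^ 2 + 1) * s ^ 2) :=
              Real.sqrt_le_sqrt h1
          _ = A * s := by
              rw [Real.sqrt_mul (by positivity), Real.sqrt_sq hs0.le, hAdef]
      have hhalf : s ^ 2 / 2 ≤ ‖v‖ ^ 2 + ‖q‖ ^ 2 := by
        rw [hsdef]; nlinarith [sq_nonneg (‖v‖ - ‖q‖)]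
      have hA' : 1 / (2 * A) * (A * s) = s / 2 := by field_simp
      calc 1 / (2 * A) * s * Real.sqrt (‖τ‖ ^ 2 + ‖v‖ ^ 2)
            ≤ 1 / (2 * A) * s * (A * s) := by
              apply mul_le_mul_of_nonneg_left hDle (by positivity)
        _ = s ^ 2 / 2 := by field_simp
        _ ≤ ‖v‖ ^ 2 + ‖q‖ ^ 2 := hhalf
    exact key.trans (le_ciSup hbdd ⟨τ, hτ0⟩)
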